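/- Let p and s be natural numbers with 0 < s ≤ p and let A : Matrix (Fin p) (Fin s) ℝ have rank s. Then the function M ↦ -log(det(Aᵀ * M⁻¹ * A)) is concave on the set of symmetric positive definite p×p real matrices: for all symmetric positive definite matrices M and N and all t ∈ [0,1], -log(det(Aᵀ * ((1-t) • M + t • N)⁻¹ * A)) ≥ (1-t) * (-log(det(Aᵀ * M⁻¹ * A))) + t * (-log(det(Aᵀ * N⁻¹ * A))). -/

import Mathlib

open Matrix BigOperators

section Aux
variable {n : ℕ}

lemma herm_smul {X : Matrix (Fin n) (Fin n) ℝ} (hX : X.IsHermitian) (c : ℝ) :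
    (c • X).IsHermitian := by
  unfold Matrix.IsHermitian at *
  rw [conjTranspose_smul, hX]
  simp

lemma psd_smul {X : Matrix (Fin n) (Fin n) ℝ} (hX : X.PosSemidef) {c : ℝ} (hc : 0 ≤ c) :
    (c • X).PosSemidef := by
  refine ⟨herm_smul hX.1 c, fun x => ?_⟩
  exact (hX.smul hc).2 x

lemma pd_conv {B C : Matrix (Fin n) (Fin n) ℝ} (hB : B.PosDef) (hC : C.PosDef)
    {t : ℝ} (ht0 : 0 ≤ t) (ht1 : t ≤ 1) : ((1 - t) • B + t • C).PosDef := by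
  refine posDef_iff_dotProduct_mulVec.mpr ⟨(herm_smul hB.1 _).add (herm_smul hC.1 _), fun x hx => ?_⟩
  rw [add_mulVec, dotProduct_add, smul_mulVec, smul_mulVec,
    dotProduct_smul, dotProduct_smul]
  rcases eq_or_lt_of_le ht0 with h | h
  · simp only [← h, sub_zero, zero_smul, smul_eq_mul]
    simpa using hB.dotProduct_mulVec_pos hx
  · have h1 : 0 ≤ (1 - t) * (star x ⬝ᵥ B *ᵥ x) :=
      mul_nonneg (by linarith) (le_of_lt (hB.dotProduct_mulVec_pos hx))
    have h2 : 0 < t * (star x ⬝ᵥ C *ᵥ x) := mul_pos h (hC.dotProduct_mulVec_pos hx)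
    exact add_pos_of_nonneg_of_pos h1 (by exact_mod_cast h2)

lemma det_aone_add_bX {X : Matrix (Fin n) (Fin n) ℝ} (hX : X.IsHermitian) (a b : ℝ) :
    (a • (1 : Matrix (Fin n) (Fin n) ℝ) + b • X).det = ∏ i, (a + b * hX.eigenvalues i) := by
  set U : Matrix (Fin n) (Fin n) ℝ := (hX.eigenvectorUnitary : Matrix (Fin n) (Fin n) ℝ)
  have hU : U * star U = 1 := (Matrix.mem_unitaryGroup_iff).mp hX.eigenvectorUnitary.2
  set D : Matrix (Fin n) (Fin n) ℝ := diagonal (RCLike.ofReal ∘ hX.eigenvalues)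
  have expand : U * (a • (1 : Matrix (Fin n) (Fin n) ℝ) + b • D) * star U
      = a • (U * 1 * star U) + b • (U * D * star U) := by
    rw [mul_add, add_mul, Matrix.mul_smul, Matrix.smul_mul, Matrix.mul_smul, Matrix.smul_mul]
  have key : a • (1 : Matrix (Fin n) (Fin n) ℝ) + b • X =
      U * (a • (1 : Matrix (Fin n) (Fin n) ℝ) + b • D) * star U := by
    rw [expand, Matrix.mul_one, hU]
    conv_lhs => rw [hX.spectral_theorem]
    rfl
  have hdU : U.det * (star U).det = 1 := by rw [← Matrix.det_mul, hU, Matrix.det_one]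
  rw [key, Matrix.det_mul, Matrix.det_mul]
  have : (a • (1 : Matrix (Fin n) (Fin n) ℝ) + b • D).det = ∏ i, (a + b * hX.eigenvalues i) := by
    have : a • (1 : Matrix (Fin n) (Fin n) ℝ) + b • D
        = diagonal (fun i => a + b * hX.eigenvalues i) := by
      ext i j
      rcases eq_or_ne i j with rfl | hij
      · simp [D, Matrix.diagonal_apply_eq, Matrix.one_apply_eq]
      · simp [D, Matrix.diagonal_apply_ne _ hij, Matrix.one_apply_ne hij]
    rw [this, Matrix.det_diagonal]
  rw [this, mul_right_comm, hdU, one_mul]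

lemma pd_conj {m k : ℕ} {X : Matrix (Fin m) (Fin m) ℝ} (hX : X.PosDef)
    (E : Matrix (Fin m) (Fin k) ℝ) (hE : ∀ x, E *ᵥ x = 0 → x = 0) :
    (Eᵀ * X * E).PosDef := by
  rw [← conjTranspose_eq_transpose_of_trivial]
  refine posDef_iff_dotProduct_mulVec.mpr ⟨isHermitian_conjTranspose_mul_mul E hX.1, fun x hx => ?_⟩
  have hEx : E *ᵥ x ≠ 0 := fun h => hx (hE x h)
  simpa only [star_mulVec, dotProduct_mulVec, vecMul_vecMul] using hX.dotProduct_mulVec_pos hEx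

lemma psd_conj {m k : ℕ} {X : Matrix (Fin m) (Fin m) ℝ} (hX : X.PosSemidef)
    (E : Matrix (Fin m) (Fin k) ℝ) : (Eᵀ * X * E).PosSemidef := by
  rw [← conjTranspose_eq_transpose_of_trivial]
  exact hX.conjTranspose_mul_mul_same E

lemma pd_sqrt {B : Matrix (Fin n) (Fin n) ℝ} (hB : B.PosDef) :
    ∃ R : Matrix (Fin n) (Fin n) ℝ, R * R = B ∧ IsUnit R.det ∧ (R⁻¹)ᵀ = R⁻¹ ∧
      R.det * R.det = B.det := by
  obtain ⟨R0, hR0, -, hRR0⟩ := open scoped MatrixOrder in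
    CFC.exists_sqrt_of_isSelfAdjoint_of_quasispectrumRestricts hB.1
      (QuasispectrumRestricts.nnreal_of_nonneg hB.posSemidef.nonneg)
  refine ⟨R0, hRR0, ?_, ?_, ?_⟩
  · rw [isUnit_iff_ne_zero]
    intro h
    have : B.det = 0 := by
      rw [← hRR0, Matrix.det_mul, h, mul_zero]
    exact (ne_of_gt hB.det_pos) this
  · rw [Matrix.transpose_nonsing_inv]
    congr 1
  · rw [← Matrix.det_mul, hRR0]

lemma det_mono {B C : Matrix (Fin n) (Fin n) ℝ} (hB : B.PosDef)
    (hD : (C - B).PosSemidef) : B.det ≤ C.det := by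
  obtain ⟨R, hRR, hu, hRiT, hdet⟩ := pd_sqrt hB
  set X := R⁻¹ * (C - B) * R⁻¹ with hXdef
  have hX : X.PosSemidef := by
    have := psd_conj hD R⁻¹
    rwa [hRiT] at this
  have hRXR : R * X * R = C - B := by
    calc R * (R⁻¹ * (C - B) * R⁻¹) * R
        = R * (R⁻¹ * ((C - B) * R⁻¹)) * R := by rw [Matrix.mul_assoc R⁻¹]
      _ = ((C - B) * R⁻¹) * R := by rw [Matrix.mul_nonsing_inv_cancel_left _ _ hu]
      _ = C - B := Matrix.nonsing_inv_mul_cancel_right _ _ hu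
  have hC : C = R * (1 + X) * R := by
    rw [mul_add, add_mul, hRXR, Matrix.mul_one, hRR]
    abel
  have hdetX : (1 + X).det = ∏ i, (1 + 1 * hX.1.eigenvalues i) := by
    rw [← det_aone_add_bX hX.1 1 1, one_smul, one_smul]
  have hprod : (1 : ℝ) ≤ ∏ i, (1 + 1 * hX.1.eigenvalues i) := by
    have h := Finset.prod_le_prod (s := Finset.univ) (f := fun _ : Fin n => (1:ℝ))
      (g := fun i => 1 + 1 * hX.1.eigenvalues i) (fun i _ => zero_le_one)
      (fun i _ => by show (1:ℝ) ≤ 1 + 1 * hX.1.eigenvalues i; have := hX.eigenvalues_nonneg i; linarith)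
    simpa using h
  calc B.det = R.det * R.det := hdet.symm
    _ ≤ R.det * R.det * ((1 + X).det) := by
        nlinarith [hB.det_pos, hdet]
    _ = C.det := by rw [hC, Matrix.det_mul, Matrix.det_mul]; ring

lemma RYR_cancel {R Y : Matrix (Fin n) (Fin n) ℝ} (hu : IsUnit R.det) :
    R * (R⁻¹ * Y * R⁻¹) * R = Y := by
  calc R * (R⁻¹ * Y * R⁻¹) * R
      = R * (R⁻¹ * (Y * R⁻¹)) * R := by rw [Matrix.mul_assoc R⁻¹]
    _ = (Y * R⁻¹) * R := by rw [Matrix.mul_nonsing_inv_cancel_left _ _ hu]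
    _ = Y := Matrix.nonsing_inv_mul_cancel_right _ _ hu

lemma logdet_concave {B C : Matrix (Fin n) (Fin n) ℝ} (hB : B.PosDef) (hC : C.PosDef)
    {t : ℝ} (ht0 : 0 ≤ t) (ht1 : t ≤ 1) :
    (1 - t) * Real.log B.det + t * Real.log C.det ≤ Real.log ((1 - t) • B + t • C).det := by
  obtain ⟨R, hRR, hu, hRiT, hdet⟩ := pd_sqrt hB
  set X := R⁻¹ * C * R⁻¹ with hXdef
  have hX : X.PosDef := by
    have hinj : ∀ x, R⁻¹ *ᵥ x = 0 → x = 0 := by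
      intro x hx
      have : R *ᵥ (R⁻¹ *ᵥ x) = x := by
        rw [Matrix.mulVec_mulVec, Matrix.mul_nonsing_inv _ hu, Matrix.one_mulVec]
      rw [hx, Matrix.mulVec_zero] at this
      exact this.symm
    have := pd_conj hC R⁻¹ hinj
    rwa [hRiT] at this
  set lam := hX.1.eigenvalues with hlam
  have hlampos : ∀ i, 0 < lam i := fun i => hX.eigenvalues_pos i
  have comb : (1 - t) • B + t • C = R * ((1 - t) • 1 + t • X) * R := by
    rw [mul_add, add_mul, Matrix.mul_smul, Matrix.smul_mul, Matrix.mul_smul, Matrix.smul_mul,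
      Matrix.mul_one, hRR, RYR_cancel hu]
  have hdetcomb : ((1 - t) • B + t • C).det = B.det * ∏ i, (1 - t + t * lam i) := by
    rw [comb, Matrix.det_mul, Matrix.det_mul, det_aone_add_bX hX.1, mul_right_comm, hdet]
  have hdetX : X.det = ∏ i, lam i := by
    have := det_aone_add_bX hX.1 0 1
    simp only [zero_smul, one_smul, zero_add, one_mul] at this
    exact this
  have hdetC : C.det = B.det * ∏ i, lam i := by
    have : C = R * X * R := (RYR_cancel hu).symm
    rw [this, Matrix.det_mul, Matrix.det_mul, hdetX, mul_right_comm, hdet]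
  have hpos : ∀ i, 0 < 1 - t + t * lam i := by
    intro i
    rcases lt_or_eq_of_le ht1 with h | h
    · have : 0 ≤ t * lam i := mul_nonneg ht0 (hlampos i).le
      linarith
    · rw [h]; simpa using hlampos i
  have hkey : ∀ i, t * Real.log (lam i) ≤ Real.log (1 - t + t * lam i) := by
    intro i
    have hgm : (lam i) ^ t ≤ 1 - t + t * lam i := by
      have := Real.geom_mean_le_arith_mean2_weighted (by linarith : (0:ℝ) ≤ 1 - t) ht0
        zero_le_one (hlampos i).le (by ring)
      simpa using this
    calc t * Real.log (lam i) = Real.log ((lam i) ^ t) := (Real.log_rpow (hlampos i) t).symm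
      _ ≤ Real.log (1 - t + t * lam i) :=
          Real.log_le_log (Real.rpow_pos_of_pos (hlampos i) t) hgm
  have hsum : t * ∑ i, Real.log (lam i) ≤ ∑ i, Real.log (1 - t + t * lam i) := by
    rw [Finset.mul_sum]
    exact Finset.sum_le_sum fun i _ => hkey i
  have hlogC : Real.log C.det = Real.log B.det + ∑ i, Real.log (lam i) := by
    rw [hdetC, Real.log_mul (ne_of_gt hB.det_pos)
      (ne_of_gt (Finset.prod_pos fun i _ => hlampos i)),
      Real.log_prod fun i _ => ne_of_gt (hlampos i)]
  have hlogcomb : Real.log ((1 - t) • B + t • C).det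
      = Real.log B.det + ∑ i, Real.log (1 - t + t * lam i) := by
    rw [hdetcomb, Real.log_mul (ne_of_gt hB.det_pos)
      (ne_of_gt (Finset.prod_pos fun i _ => hpos i)),
      Real.log_prod fun i _ => ne_of_gt (hpos i)]
  rw [hlogC, hlogcomb]
  ring_nf
  linarith [hsum]

lemma gauss_markov {m k : ℕ} {M : Matrix (Fin m) (Fin m) ℝ} (hM : M.PosDef)
    (A : Matrix (Fin m) (Fin k) ℝ) (hB : (Aᵀ * M⁻¹ * A).PosDef)
    (L : Matrix (Fin m) (Fin k) ℝ) (hL : Aᵀ * L = 1) :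
    (Lᵀ * M * L - (Aᵀ * M⁻¹ * A)⁻¹).PosSemidef := by
  have hMu : IsUnit M.det := isUnit_iff_ne_zero.mpr (ne_of_gt hM.det_pos)
  set Bm := Aᵀ * M⁻¹ * A with hBmdef
  have hBu : IsUnit Bm.det := isUnit_iff_ne_zero.mpr (ne_of_gt hB.det_pos)
  set Cm := Bm⁻¹ with hCmdef
  have hMiT : (M⁻¹)ᵀ = M⁻¹ := by
    rw [Matrix.transpose_nonsing_inv]
    congr 1
    rw [← conjTranspose_eq_transpose_of_trivial, hM.1.eq]
  have hCmT : Cmᵀ = Cm := by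
    rw [hCmdef, Matrix.transpose_nonsing_inv]
    congr 1
    rw [← conjTranspose_eq_transpose_of_trivial, hB.1.eq]
  set P := M⁻¹ * (A * Cm) with hPdef
  have hLA : Lᵀ * A = 1 := by
    have := congrArg Matrix.transpose hL
    simpa [Matrix.transpose_mul] using this
  have hMP : M * P = A * Cm := Matrix.mul_nonsing_inv_cancel_left _ _ hMu
  have e1 : Lᵀ * M * P = Cm := by
    rw [Matrix.mul_assoc, hMP, ← Matrix.mul_assoc, hLA, Matrix.one_mul]
  have hPT : Pᵀ = Cm * Aᵀ * M⁻¹ := by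
    rw [hPdef, Matrix.transpose_mul, Matrix.transpose_mul, hMiT, hCmT, Matrix.mul_assoc]
  have hPTM : Pᵀ * M = Cm * Aᵀ := by
    rw [hPT, Matrix.nonsing_inv_mul_cancel_right _ _ hMu]
  have e2 : Pᵀ * M * L = Cm := by
    rw [hPTM, Matrix.mul_assoc, hL, Matrix.mul_one]
  have e3 : Pᵀ * M * P = Cm := by
    rw [hPTM, hPdef, Matrix.mul_assoc, ← Matrix.mul_assoc Aᵀ,
      ← Matrix.mul_assoc (Aᵀ * M⁻¹) A, hCmdef, Matrix.mul_nonsing_inv _ hBu, Matrix.mul_one]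
  have h0 : ((L - P)ᵀ * M * (L - P)).PosSemidef := psd_conj hM.posSemidef (L - P)
  have expand : (L - P)ᵀ * M * (L - P)
      = Lᵀ * M * L - Lᵀ * M * P - (Pᵀ * M * L - Pᵀ * M * P) := by
    rw [Matrix.transpose_sub, Matrix.sub_mul, Matrix.sub_mul, Matrix.mul_sub, Matrix.mul_sub]
  rw [expand, e1, e2, e3, sub_self, sub_zero] at h0
  exact h0

lemma rank_inj {m k : ℕ} (A : Matrix (Fin m) (Fin k) ℝ) (hA : A.rank = k) :
    ∀ x, A *ᵥ x = 0 → x = 0 := by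
  have h1 : Module.finrank ℝ (LinearMap.range A.mulVecLin)
      + Module.finrank ℝ (LinearMap.ker A.mulVecLin) = k := by
    rw [LinearMap.finrank_range_add_finrank_ker]
    simp
  have h2 : Module.finrank ℝ (LinearMap.range A.mulVecLin) = k := hA
  have h3 : Module.finrank ℝ (LinearMap.ker A.mulVecLin) = 0 := by omega
  have h4 : LinearMap.ker A.mulVecLin = ⊥ := Submodule.finrank_eq_zero.mp h3
  intro x hx
  have : x ∈ LinearMap.ker A.mulVecLin := by
    rw [LinearMap.mem_ker]
    simpa using hx
  rw [h4] at this
  simpa using this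
end Aux

/-- The `D_A`-criterion `M ↦ -log det(Aᵀ M⁻¹ A)` is concave on the cone of
symmetric positive definite matrices. -/
theorem DA_criterion_concave
    (p s : ℕ) (hs : 0 < s) (hsp : s ≤ p)
    (A : Matrix (Fin p) (Fin s) ℝ) (hA : A.rank = s)
    (M N : Matrix (Fin p) (Fin p) ℝ) (hM : M.PosDef) (hN : N.PosDef)
    (t : ℝ) (ht0 : 0 ≤ t) (ht1 : t ≤ 1) :
    (1 - t) * (-Real.log (Aᵀ * M⁻¹ * A).det) + t * (-Real.log (Aᵀ * N⁻¹ * A).det) ≤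
      -Real.log (Aᵀ * ((1 - t) • M + t • N)⁻¹ * A).det := by

  have hinj := rank_inj A hA
  set K := (1 - t) • M + t • N with hKdef
  have hK : K.PosDef := pd_conv hM hN ht0 ht1
  have hKu : IsUnit K.det := isUnit_iff_ne_zero.mpr (ne_of_gt hK.det_pos)
  -- information matrices
  have hBm : (Aᵀ * M⁻¹ * A).PosDef := pd_conj hM.inv A hinj
  have hBn : (Aᵀ * N⁻¹ * A).PosDef := pd_conj hN.inv A hinj
  have hBk : (Aᵀ * K⁻¹ * A).PosDef := pd_conj hK.inv A hinj
  have hBku : IsUnit (Aᵀ * K⁻¹ * A).det := isUnit_iff_ne_zero.mpr (ne_of_gt hBk.det_pos)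
  set Cm := (Aᵀ * M⁻¹ * A)⁻¹ with hCm
  set Cn := (Aᵀ * N⁻¹ * A)⁻¹ with hCn
  set Ck := (Aᵀ * K⁻¹ * A)⁻¹ with hCk
  have hCmpd : Cm.PosDef := hBm.inv
  have hCnpd : Cn.PosDef := hBn.inv
  have hCkpd : Ck.PosDef := hBk.inv
  -- the optimal L
  set L := K⁻¹ * (A * Ck) with hLdef
  have hKL : K * L = A * Ck := Matrix.mul_nonsing_inv_cancel_left _ _ hKu
  have hAL : Aᵀ * L = 1 := by
    rw [hLdef, ← Matrix.mul_assoc, ← Matrix.mul_assoc, hCk,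
      Matrix.mul_nonsing_inv _ hBku]
  have hLA : Lᵀ * A = 1 := by
    have := congrArg Matrix.transpose hAL
    simpa [Matrix.transpose_mul] using this
  have hLKL : Lᵀ * K * L = Ck := by
    rw [Matrix.mul_assoc, hKL, ← Matrix.mul_assoc, hLA, Matrix.one_mul]
  -- Gauss–Markov inequalities
  have hD1 : (Lᵀ * M * L - Cm).PosSemidef := gauss_markov hM A hBm L hAL
  have hD2 : (Lᵀ * N * L - Cn).PosSemidef := gauss_markov hN A hBn L hAL
  -- combination
  set W := (1 - t) • Cm + t • Cn with hW
  have hWpd : W.PosDef := pd_conv hCmpd hCnpd ht0 ht1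
  have hsplit : Lᵀ * K * L = (1 - t) • (Lᵀ * M * L) + t • (Lᵀ * N * L) := by
    rw [hKdef, Matrix.mul_add, Matrix.add_mul, Matrix.mul_smul, Matrix.smul_mul,
      Matrix.mul_smul, Matrix.smul_mul]
  have hdiff : Ck - W = (1 - t) • (Lᵀ * M * L - Cm) + t • (Lᵀ * N * L - Cn) := by
    rw [← hLKL, hsplit, hW, smul_sub, smul_sub]
    abel
  have hpsd : (Ck - W).PosSemidef := by
    rw [hdiff]
    exact (psd_smul hD1 (by linarith)).add (psd_smul hD2 ht0)
  -- determinant chain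
  have h1 : W.det ≤ Ck.det := det_mono hWpd hpsd
  have h2 : Real.log W.det ≤ Real.log Ck.det := Real.log_le_log hWpd.det_pos h1
  have h3 := logdet_concave hCmpd hCnpd ht0 ht1
  rw [← hW] at h3
  -- translate logs of inverses
  have im : Real.log Cm.det = -Real.log (Aᵀ * M⁻¹ * A).det := by
    rw [hCm, Matrix.det_nonsing_inv, Ring.inverse_eq_inv', Real.log_inv]
  have in' : Real.log Cn.det = -Real.log (Aᵀ * N⁻¹ * A).det := by
    rw [hCn, Matrix.det_nonsing_inv, Ring.inverse_eq_inv', Real.log_inv]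
  have ik : Real.log Ck.det = -Real.log (Aᵀ * K⁻¹ * A).det := by
    rw [hCk, Matrix.det_nonsing_inv, Ring.inverse_eq_inv', Real.log_inv]
  rw [im, in'] at h3
  rw [ik] at h2
  linarith
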